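/- The SU(2) matrix coefficients satisfy the multiplication identity (2l+1)·Z·t^l_{n,m}(Z) = M₊(Z) + N(Z)·M₋(Z), where M₊(Z) is the 2×2 matrix with entries (l−n+1)t^{l+½}_{n−½,m∓½}(Z) in the first row and (l+n+1)t^{l+½}_{n+½,m∓½}(Z) in the second row, and M₋(Z) is the matrix with entries ((l+m)t^{l−½}_{n−½,m−½}(Z), −(l−m)t^{l−½}_{n−½,m+½}(Z); −(l+m)t^{l−½}_{n+½,m−½}(Z), (l−m)t^{l−½}_{n+½,m+½}(Z)). -/

import Mathlib

noncomputable section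

/-- The SU(2) matrix coefficient `t^l_{n,m}` in the parametrization `a = l − m`,
`b = l + m`, `k = n − l`:
`T a b k (Z) = (1/2πi) ∮_{|s|=1} (s z₁₁ + z₂₁)^a (s z₁₂ + z₂₂)^b s^k ds/s`,
regarded as a polynomial in the entries of the 2×2 complex matrix `Z`. -/
def Tc (a b : ℕ) (k : ℤ) (Z : Fin 2 → Fin 2 → ℂ) : ℂ :=
  (2 * (Real.pi : ℂ) * Complex.I)⁻¹ *
    circleIntegral (fun s => (s * Z 0 0 + Z 1 0) ^ a * (s * Z 0 1 + Z 1 1) ^ b * s ^ (k - 1)) 0 1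

/-- The partial derivative `∂ᵢⱼ = ∂/∂zᵢⱼ` in the entries of a 2×2 complex matrix. -/
def mpd (i j : Fin 2) (f : (Fin 2 → Fin 2 → ℂ) → ℂ) : (Fin 2 → Fin 2 → ℂ) → ℂ :=
  fun Z => fderiv ℂ f Z (Pi.single i (Pi.single j 1))

/-- `N(Z) = det Z` for a 2×2 matrix. -/
def detc (Z : Fin 2 → Fin 2 → ℂ) : ℂ := Z 0 0 * Z 1 1 - Z 0 1 * Z 1 0

open Complex Metric

/-- The basic integrands are circle integrable. -/
private lemma cig (x u y v c : ℂ) (a b : ℕ) (m : ℤ) :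
    CircleIntegrable (fun s : ℂ => c * ((s * x + u) ^ a * (s * y + v) ^ b * s ^ m)) 0 1 := by
  apply ContinuousOn.circleIntegrable zero_le_one
  intro s hs
  have hs0 : s ≠ 0 := by
    intro h
    rw [h] at hs
    simp at hs
  apply ContinuousAt.continuousWithinAt
  have h1 : ContinuousAt (fun s : ℂ => (s * x + u) ^ a * (s * y + v) ^ b) s := by fun_prop
  have h2 : ContinuousAt (fun s : ℂ => s ^ m) s := continuousAt_zpow₀ s m (Or.inl hs0)
  exact continuousAt_const.mul (h1.mul h2)

/-- Derivative of the basic integrand, with the value given as a hypothesis. -/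
private lemma hdg (x u y v : ℂ) (a b : ℕ) (m : ℤ) {s : ℂ} (hs : s ≠ 0) {D : ℂ}
    (hD : D = ((a : ℂ) * (s * x + u) ^ (a - 1) * x * (s * y + v) ^ b
          + (s * x + u) ^ a * ((b : ℂ) * (s * y + v) ^ (b - 1) * y)) * s ^ m
        + (s * x + u) ^ a * (s * y + v) ^ b * ((m : ℂ) * s ^ (m - 1))) :
    HasDerivAt (fun s : ℂ => (s * x + u) ^ a * (s * y + v) ^ b * s ^ m) D s := by
  have h1 : HasDerivAt (fun s : ℂ => s * x + u) x s := by
    simpa using ((hasDerivAt_id s).mul_const x).add_const u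
  have h2 : HasDerivAt (fun s : ℂ => s * y + v) y s := by
    simpa using ((hasDerivAt_id s).mul_const y).add_const v
  have h3 := ((h1.pow a).mul (h2.pow b)).mul (hasDerivAt_zpow m s (Or.inl hs))
  rw [hD]
  exact h3

private lemma my_integral_add3 {f g h : ℂ → ℂ} {c : ℂ} {R : ℝ} (hf : CircleIntegrable f c R)
    (hg : CircleIntegrable g c R) (hh : CircleIntegrable h c R) :
    circleIntegral (fun z => f z + g z + h z) c R
      = circleIntegral f c R + circleIntegral g c R + circleIntegral h c R := by
  simp only [circleIntegral, smul_add,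
    intervalIntegral.integral_add (hf.out.add hg.out) hh.out,
    intervalIntegral.integral_add hf.out hg.out]

/-- If a linear combination of basic integrands is the derivative of a function defined
near the unit circle, then the corresponding combination of circle integrals vanishes. -/
private lemma comb_zero (x u y v : ℂ) (c1 c2 c3 : ℂ) (a1 b1 a2 b2 a3 b3 : ℕ)
    (m1 m2 m3 : ℤ) (F : ℂ → ℂ)
    (h : ∀ s : ℂ, s ≠ 0 → HasDerivAt F
      (c1 * ((s * x + u) ^ a1 * (s * y + v) ^ b1 * s ^ m1)
        + c2 * ((s * x + u) ^ a2 * (s * y + v) ^ b2 * s ^ m2)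
        + c3 * ((s * x + u) ^ a3 * (s * y + v) ^ b3 * s ^ m3)) s) :
    c1 * circleIntegral (fun s => (s * x + u) ^ a1 * (s * y + v) ^ b1 * s ^ m1) 0 1
      + c2 * circleIntegral (fun s => (s * x + u) ^ a2 * (s * y + v) ^ b2 * s ^ m2) 0 1
      + c3 * circleIntegral (fun s => (s * x + u) ^ a3 * (s * y + v) ^ b3 * s ^ m3) 0 1 = 0 := by
  rw [← circleIntegral.integral_const_mul c1, ← circleIntegral.integral_const_mul c2,
    ← circleIntegral.integral_const_mul c3,
    ← my_integral_add3 (cig x u y v c1 a1 b1 m1) (cig x u y v c2 a2 b2 m2)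
      (cig x u y v c3 a3 b3 m3)]
  apply circleIntegral.integral_eq_zero_of_hasDerivWithinAt (f := F) zero_le_one
  intro s hs
  have hs0 : s ≠ 0 := by
    intro h0
    rw [h0] at hs
    simp at hs
  exact (h s hs0).hasDerivWithinAt

/-- the multiplication identity
`(2l+1)·Z·t^l_{n,m}(Z) = M₊(Z) + N(Z)·M₋(Z)` for SU(2) matrix coefficients, written
entrywise in the parametrization `a = l−m`, `b = l+m`, `k = n−l` (`−(a+b) ≤ k ≤ 0`),
so that `2l+1 = a+b+1`, `l−n+1 = 1−k`, `l+n+1 = a+b+k+1`, `l−m = a`, `l+m = b`. -/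
theorem mul_matrix_coefficients (a b : ℕ) (k : ℤ)
    (hk1 : -(a + b : ℤ) ≤ k) (hk2 : k ≤ 0) :
    ∀ Z : Fin 2 → Fin 2 → ℂ,
      ((a : ℂ) + b + 1) * Z 0 0 * Tc a b k Z
        = (1 - (k : ℂ)) * Tc (a + 1) b (k - 1) Z + detc Z * ((b : ℂ) * Tc a (b - 1) k Z) ∧
      ((a : ℂ) + b + 1) * Z 0 1 * Tc a b k Z
        = (1 - (k : ℂ)) * Tc a (b + 1) (k - 1) Z + detc Z * (-(a : ℂ) * Tc (a - 1) b k Z) ∧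
      ((a : ℂ) + b + 1) * Z 1 0 * Tc a b k Z
        = ((a : ℂ) + b + k + 1) * Tc (a + 1) b k Z + detc Z * (-(b : ℂ) * Tc a (b - 1) (k + 1) Z) ∧
      ((a : ℂ) + b + 1) * Z 1 1 * Tc a b k Z
        = ((a : ℂ) + b + k + 1) * Tc a (b + 1) k Z + detc Z * ((a : ℂ) * Tc (a - 1) b (k + 1) Z) := by
  intro Z
  simp only [Tc, detc]
  set x := Z 0 0 with hx
  set y := Z 0 1 with hy
  set u := Z 1 0 with hu
  set v := Z 1 1 with hv
  refine ⟨?_, ?_, ?_, ?_⟩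
  · -- entry (0,0)
    have key := comb_zero x u y v (((a : ℂ) + b + 1) * x) (-(1 - (k : ℂ)))
      (-((x * v - y * u) * b)) a b (a + 1) b a (b - 1) (k - 1) (k - 1 - 1) (k - 1)
      (fun s : ℂ => (s * x + u) ^ (a + 1) * (s * y + v) ^ b * s ^ (k - 1)) ?_
    · linear_combination (2 * (Real.pi : ℂ) * Complex.I)⁻¹ * key
    · intro s hs0
      refine hdg x u y v (a + 1) b (k - 1) hs0 ?_
      have hA : s ^ (k - 1) = s ^ (k - 1 - 1) * s := by
        rw [← zpow_add_one₀ hs0]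
        congr 1; ring
      rcases b with _ | c
      · simp only [Nat.add_sub_cancel, Nat.zero_sub, Nat.cast_zero, Nat.cast_ofNat,
          pow_zero, hA]
        push_cast
        ring
      · simp only [Nat.add_sub_cancel, Nat.succ_sub_one, hA]
        push_cast
        ring
  · -- entry (0,1)
    have key := comb_zero x u y v (((a : ℂ) + b + 1) * y) (-(1 - (k : ℂ)))
      (-((x * v - y * u) * (-(a : ℂ)))) a b a (b + 1) (a - 1) b (k - 1) (k - 1 - 1) (k - 1)
      (fun s : ℂ => (s * x + u) ^ a * (s * y + v) ^ (b + 1) * s ^ (k - 1)) ?_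
    · linear_combination (2 * (Real.pi : ℂ) * Complex.I)⁻¹ * key
    · intro s hs0
      refine hdg x u y v a (b + 1) (k - 1) hs0 ?_
      have hA : s ^ (k - 1) = s ^ (k - 1 - 1) * s := by
        rw [← zpow_add_one₀ hs0]
        congr 1; ring
      rcases a with _ | c
      · simp only [Nat.add_sub_cancel, Nat.zero_sub, Nat.cast_zero, pow_zero, hA]
        push_cast
        ring
      · simp only [Nat.add_sub_cancel, Nat.succ_sub_one, hA]
        push_cast
        ring
  · -- entry (1,0)
    have key := comb_zero x u y v (-(((a : ℂ) + b + 1) * u)) ((a : ℂ) + b + k + 1)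
      ((x * v - y * u) * (-(b : ℂ))) a b (a + 1) b a (b - 1) (k - 1) (k - 1) (k + 1 - 1)
      (fun s : ℂ => (s * x + u) ^ (a + 1) * (s * y + v) ^ b * s ^ k) ?_
    · linear_combination (-(2 * (Real.pi : ℂ) * Complex.I)⁻¹) * key
    · intro s hs0
      refine hdg x u y v (a + 1) b k hs0 ?_
      have hB : s ^ (k + 1 - 1) = s ^ (k - 1) * s := by
        rw [← zpow_add_one₀ hs0]
        congr 1; ring
      have hC : s ^ k = s ^ (k - 1) * s := by
        rw [← zpow_add_one₀ hs0]
        congr 1; ring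
      rcases b with _ | c
      · simp only [Nat.add_sub_cancel, Nat.zero_sub, Nat.cast_zero, pow_zero, hB, hC]
        push_cast
        ring
      · simp only [Nat.add_sub_cancel, Nat.succ_sub_one, hB, hC]
        push_cast
        ring
  · -- entry (1,1)
    have key := comb_zero x u y v (-(((a : ℂ) + b + 1) * v)) ((a : ℂ) + b + k + 1)
      ((x * v - y * u) * (a : ℂ)) a b a (b + 1) (a - 1) b (k - 1) (k - 1) (k + 1 - 1)
      (fun s : ℂ => (s * x + u) ^ a * (s * y + v) ^ (b + 1) * s ^ k) ?_
    · linear_combination (-(2 * (Real.pi : ℂ) * Complex.I)⁻¹) * key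
    · intro s hs0
      refine hdg x u y v a (b + 1) k hs0 ?_
      have hB : s ^ (k + 1 - 1) = s ^ (k - 1) * s := by
        rw [← zpow_add_one₀ hs0]
        congr 1; ring
      have hC : s ^ k = s ^ (k - 1) * s := by
        rw [← zpow_add_one₀ hs0]
        congr 1; ring
      rcases a with _ | c
      · simp only [Nat.add_sub_cancel, Nat.zero_sub, Nat.cast_zero, pow_zero, hB, hC]
        push_cast
        ring
      · simp only [Nat.add_sub_cancel, Nat.succ_sub_one, hB, hC]
        push_cast
        ring
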